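/- In a recollement of abelian categories (A, B, C), if the functor i* is exact then the composite i^! ∘ j_! is zero, and if the functor i^! is exact then the composite i* ∘ j_* is zero. -/

import Mathlib

open CategoryTheory Limits

universe u₁ u₂ u₃ v₁ v₂ v₃

/-- A recollement of abelian categories `(𝒜, ℬ, 𝒞)`. -/
structure Recollement (𝒜 : Type u₁) (ℬ : Type u₂) (𝒞 : Type u₃)
    [Category.{v₁} 𝒜] [Category.{v₂} ℬ] [Category.{v₃} 𝒞]
    [Abelian 𝒜] [Abelian ℬ] [Abelian 𝒞] where
  /-- `i^* : ℬ → 𝒜` -/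
  iStar : ℬ ⥤ 𝒜
  /-- `i_* : 𝒜 → ℬ` -/
  iIns : 𝒜 ⥤ ℬ
  /-- `i^! : ℬ → 𝒜` -/
  iShriek : ℬ ⥤ 𝒜
  /-- `j_! : 𝒞 → ℬ` -/
  jShriek : 𝒞 ⥤ ℬ
  /-- `j^* : ℬ → 𝒞` -/
  jStar : ℬ ⥤ 𝒞
  /-- `j_* : 𝒞 → ℬ` -/
  jIns : 𝒞 ⥤ ℬ
  iStar_additive : iStar.Additive
  iIns_additive : iIns.Additive
  iShriek_additive : iShriek.Additive
  jShriek_additive : jShriek.Additive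
  jStar_additive : jStar.Additive
  jIns_additive : jIns.Additive
  /-- the adjoint pair `(i^*, i_*)` -/
  adj₁ : iStar ⊣ iIns
  /-- the adjoint pair `(i_*, i^!)` -/
  adj₂ : iIns ⊣ iShriek
  /-- the adjoint pair `(j_!, j^*)` -/
  adj₃ : jShriek ⊣ jStar
  /-- the adjoint pair `(j^*, j_*)` -/
  adj₄ : jStar ⊣ jIns
  iIns_full : iIns.Full
  iIns_faithful : iIns.Faithful
  jShriek_full : jShriek.Full
  jShriek_faithful : jShriek.Faithful
  jIns_full : jIns.Full
  jIns_faithful : jIns.Faithful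
  /-- `Im i_* = Ker j^*` -/
  essImage_iIns_eq_ker_jStar : ∀ b : ℬ, iIns.essImage b ↔ IsZero (jStar.obj b)

/-- In a recollement `(𝒜, ℬ, 𝒞)`, if `i^*` is exact then `i^! ∘ j_! = 0`, and
if `i^!` is exact then `i^* ∘ j_* = 0`. -/
theorem stmt3 (𝒜 : Type u₁) (ℬ : Type u₂) (𝒞 : Type u₃)
    [Category.{v₁} 𝒜] [Category.{v₂} ℬ] [Category.{v₃} 𝒞]
    [Abelian 𝒜] [Abelian ℬ] [Abelian 𝒞] (R : Recollement 𝒜 ℬ 𝒞) :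
    ((PreservesFiniteLimits R.iStar ∧ PreservesFiniteColimits R.iStar) →
      IsZero (R.jShriek ⋙ R.iShriek)) ∧
    ((PreservesFiniteLimits R.iShriek ∧ PreservesFiniteColimits R.iShriek) →
      IsZero (R.jIns ⋙ R.iStar)) := by
  haveI := R.iIns_additive
  haveI := R.iIns_full
  haveI := R.iIns_faithful
  -- `j^*` kills objects in the image of `i_*`
  have hker : ∀ a : 𝒜, IsZero (R.jStar.obj (R.iIns.obj a)) := fun a =>
    (R.essImage_iIns_eq_ker_jStar _).mp ⟨a, ⟨Iso.refl _⟩⟩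
  -- `j^*` preserves epis and monos
  haveI : R.jStar.PreservesEpimorphisms :=
    Functor.preservesEpimorphisms_of_adjunction R.adj₄
  haveI : R.jStar.PreservesMonomorphisms :=
    Functor.preservesMonomorphisms_of_adjunction R.adj₃
  -- counit of `adj₁` and unit of `adj₂` are isos since `i_*` is fully faithful
  haveI : IsIso R.adj₁.counit := R.adj₁.counit_isIso_of_R_fully_faithful
  haveI : IsIso R.adj₂.unit := R.adj₂.unit_isIso_of_L_fully_faithful
  constructor
  · rintro ⟨hL, hC⟩
    haveI := hL
    haveI : R.iStar.PreservesMonomorphisms := inferInstance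
    apply Functor.isZero
    intro c
    -- `i^* (j_! c)` is zero
    have h1 : IsZero (R.iStar.obj (R.jShriek.obj c)) := by
      rw [IsZero.iff_id_eq_zero]
      apply (R.adj₁.homEquiv _ _).injective
      apply (R.adj₃.homEquiv _ _).injective
      exact (hker _).eq_of_tgt _ _
    -- every map `i_* a ⟶ j_! c` is zero
    have hzero : ∀ (a : 𝒜) (f : R.iIns.obj a ⟶ R.jShriek.obj c), f = 0 := by
      intro a f
      have hepi : Epi (R.jStar.map (factorThruImage f)) := inferInstance
      have hI : IsZero (R.jStar.obj (image f)) :=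
        IsZero.of_epi (R.jStar.map (factorThruImage f)) (hker a)
      obtain ⟨a', ⟨e⟩⟩ := (R.essImage_iIns_eq_ker_jStar _).mpr hI
      haveI : Mono (R.iStar.map (image.ι f)) := R.iStar.map_mono _
      have h2 : IsZero (R.iStar.obj (image f)) :=
        IsZero.of_mono (R.iStar.map (image.ι f)) h1
      have h3 : IsZero (R.iStar.obj (R.iIns.obj a')) := h2.of_iso (R.iStar.mapIso e)
      have h4 : IsZero a' := h3.of_iso (asIso (R.adj₁.counit.app a')).symm
      have h5 : IsZero (R.iIns.obj a') := R.iIns.map_isZero h4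
      have h6 : IsZero (image f) := h5.of_iso e.symm
      rw [← image.fac f, h6.eq_zero_of_src (image.ι f), comp_zero]
    simp only [Functor.comp_obj]
    rw [IsZero.iff_id_eq_zero]
    exact (R.adj₂.homEquiv _ _).symm.injective ((hzero _ _).trans (hzero _ _).symm)
  · rintro ⟨hL, hC⟩
    haveI := hC
    haveI : R.iShriek.PreservesEpimorphisms := inferInstance
    apply Functor.isZero
    intro c
    -- `i^! (j_* c)` is zero
    have h1 : IsZero (R.iShriek.obj (R.jIns.obj c)) := by
      rw [IsZero.iff_id_eq_zero]
      apply (R.adj₂.homEquiv _ _).symm.injective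
      apply (R.adj₄.homEquiv _ _).symm.injective
      exact (hker _).eq_of_src _ _
    -- every map `j_* c ⟶ i_* a` is zero
    have hzero : ∀ (a : 𝒜) (f : R.jIns.obj c ⟶ R.iIns.obj a), f = 0 := by
      intro a f
      haveI : Mono (R.jStar.map (image.ι f)) := R.jStar.map_mono _
      have hI : IsZero (R.jStar.obj (image f)) :=
        IsZero.of_mono (R.jStar.map (image.ι f)) (hker a)
      obtain ⟨a', ⟨e⟩⟩ := (R.essImage_iIns_eq_ker_jStar _).mpr hI
      haveI : Epi (R.iShriek.map (factorThruImage f)) := R.iShriek.map_epi _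
      have h2 : IsZero (R.iShriek.obj (image f)) :=
        IsZero.of_epi (R.iShriek.map (factorThruImage f)) h1
      have h3 : IsZero (R.iShriek.obj (R.iIns.obj a')) := h2.of_iso (R.iShriek.mapIso e)
      have h4 : IsZero a' := h3.of_iso (asIso (R.adj₂.unit.app a'))
      have h5 : IsZero (R.iIns.obj a') := R.iIns.map_isZero h4
      have h6 : IsZero (image f) := h5.of_iso e.symm
      rw [← image.fac f, h6.eq_zero_of_src (image.ι f), comp_zero]
    simp only [Functor.comp_obj]
    rw [IsZero.iff_id_eq_zero]
    exact (R.adj₁.homEquiv _ _).injective ((hzero _ _).trans (hzero _ _).symm)
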